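/- Given a D-poset X and elements x ≤ y, the map z ↦ z ⊖ x is an order isomorphism from the interval [x, y] := {z : x ≤ z ≤ y} to the interval [⊥, y ⊖ x], with inverse given by w ↦ ⊤ ⊖ ((⊤ ⊖ x) ⊖ w). -/

import Mathlib

/-- A D-poset: a poset with top element and a partial difference operation,
here modeled as a total function `sub` whose axioms are guarded by the
definedness condition (`sub y x` is the difference `y ⊖ x`, meaningful when `x ≤ y`). -/
structure DPoset (X : Type*) [PartialOrder X] where
  top : X
  le_top : ∀ x : X, x ≤ top
  sub : X → X → X
  sub_le : ∀ {x y : X}, x ≤ y → sub y x ≤ y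
  sub_sub_cancel : ∀ {x y : X}, x ≤ y → sub y (sub y x) = x
  sub_antitone : ∀ {x y z : X}, z ≤ y → y ≤ x → sub x y ≤ sub x z
  sub_sub_eq : ∀ {x y z : X}, z ≤ y → y ≤ x → sub (sub x z) (sub x y) = sub y z

namespace DPoset

variable {X : Type*} [PartialOrder X] (D : DPoset X)

/-- Monotonicity in the first argument. -/
lemma mono_first {a b c : X} (hab : a ≤ b) (hbc : b ≤ c) :
    D.sub b a ≤ D.sub c a := by
  have h := D.sub_sub_eq hab hbc
  calc D.sub b a = D.sub (D.sub c a) (D.sub c b) := h.symm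
    _ ≤ D.sub c a := D.sub_le (D.sub_antitone hab hbc)

/-- `⊤ ⊖ ⊤` is a bottom element. -/
lemma bot_le (a : X) : D.sub D.top D.top ≤ a := by
  have h1 : D.sub D.top D.top ≤ D.sub D.top (D.sub D.top a) :=
    D.sub_antitone (D.le_top _) le_rfl
  rwa [D.sub_sub_cancel (D.le_top a)] at h1

/-- Double complement. -/
lemma compl_compl (a : X) : D.sub D.top (D.sub D.top a) = a :=
  D.sub_sub_cancel (D.le_top a)

/-- `b ⊖ a = (⊤ ⊖ a) ⊖ (⊤ ⊖ b)` when `a ≤ b`. -/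
lemma sub_eq_compl_sub {a b : X} (hab : a ≤ b) :
    D.sub b a = D.sub (D.sub D.top a) (D.sub D.top b) :=
  (D.sub_sub_eq hab (D.le_top b)).symm

end DPoset

/-- Given a D-poset `X` and `x ≤ y`, the map `z ↦ z ⊖ x` is an order
isomorphism from the interval `[x, y]` to `[⊥, y ⊖ x]` (where `⊥ = ⊤ ⊖ ⊤`),
with inverse `w ↦ ⊤ ⊖ ((⊤ ⊖ x) ⊖ w)`. -/
theorem dposet_interval_orderIso {X : Type*} [PartialOrder X] (D : DPoset X)
    {x y : X} (hxy : x ≤ y) :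
    ∃ e : {z : X // x ≤ z ∧ z ≤ y} ≃o
        {w : X // D.sub D.top D.top ≤ w ∧ w ≤ D.sub y x},
      (∀ z : {z : X // x ≤ z ∧ z ≤ y}, (e z).1 = D.sub z.1 x) ∧
      (∀ w : {w : X // D.sub D.top D.top ≤ w ∧ w ≤ D.sub y x},
        (e.symm w).1 = D.sub D.top (D.sub (D.sub D.top x) w.1)) := by
  set t := D.top with ht
  -- bounds on complements
  have hcx : D.sub t x ≤ t := D.sub_le (D.le_top x)
  -- complements are antitone
  have hcyx : D.sub t y ≤ D.sub t x := D.sub_antitone hxy (D.le_top y)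
  -- w ≤ y⊖x → w ≤ ⊤⊖x
  have hyx_le : D.sub y x ≤ D.sub t x := D.mono_first hxy (D.le_top y)
  -- forward map bounds
  have hfwd : ∀ z : X, x ≤ z → z ≤ y → D.sub z x ≤ D.sub y x := fun z hxz hzy =>
    D.mono_first hxz hzy
  -- inverse map
  set g : X → X := fun w => D.sub t (D.sub (D.sub t x) w) with hg
  have hg_mem : ∀ w : X, D.sub t t ≤ w → w ≤ D.sub y x → x ≤ g w ∧ g w ≤ y := by
    intro w _ hw2
    have hwx : w ≤ D.sub t x := le_trans hw2 hyx_le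
    constructor
    · -- x ≤ g w
      have h1 : D.sub (D.sub t x) w ≤ D.sub t x := D.sub_le hwx
      have h2 : D.sub t (D.sub t x) ≤ D.sub t (D.sub (D.sub t x) w) :=
        D.sub_antitone h1 (D.le_top _)
      rwa [D.compl_compl x] at h2
    · -- g w ≤ y
      have hyx_eq : D.sub y x = D.sub (D.sub t x) (D.sub t y) :=
        D.sub_eq_compl_sub hxy
      have hw2' : w ≤ D.sub (D.sub t x) (D.sub t y) := hyx_eq ▸ hw2
      have h3 : D.sub (D.sub t x) (D.sub (D.sub t x) (D.sub t y)) ≤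
          D.sub (D.sub t x) w := D.sub_antitone hw2' (D.sub_le hcyx)
      rw [D.sub_sub_cancel hcyx] at h3
      have h4 : D.sub t (D.sub (D.sub t x) w) ≤ D.sub t (D.sub t y) :=
        D.sub_antitone h3 (le_trans (D.sub_le hwx) hcx)
      rwa [D.compl_compl y] at h4
  -- left inverse: g (z ⊖ x) = z for x ≤ z
  have hleft : ∀ z : X, x ≤ z → g (D.sub z x) = z := by
    intro z hxz
    have hz : D.sub t z ≤ D.sub t x := D.sub_antitone hxz (D.le_top z)
    have h1 : D.sub z x = D.sub (D.sub t x) (D.sub t z) := D.sub_eq_compl_sub hxz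
    simp only [hg, h1, D.sub_sub_cancel hz, D.compl_compl z]
    exact D.compl_compl z
  -- right inverse: (g w) ⊖ x = w for w ≤ ⊤ ⊖ x
  have hright : ∀ w : X, w ≤ D.sub t x → D.sub (g w) x = w := by
    intro w hw
    have hxgw : x ≤ g w := by
      have h1 : D.sub (D.sub t x) w ≤ D.sub t x := D.sub_le hw
      have h2 : D.sub t (D.sub t x) ≤ D.sub t (D.sub (D.sub t x) w) :=
        D.sub_antitone h1 (D.le_top _)
      rwa [D.compl_compl x] at h2
    have h1 : D.sub (g w) x = D.sub (D.sub t x) (D.sub t (g w)) :=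
      D.sub_eq_compl_sub hxgw
    have h2 : D.sub t (g w) = D.sub (D.sub t x) w := by
      simp only [hg]
      exact D.compl_compl _
    rw [h1, h2, D.sub_sub_cancel hw]
  -- monotonicity of forward map on the interval
  have hmono : ∀ z z' : X, x ≤ z → z ≤ z' → D.sub z x ≤ D.sub z' x :=
    fun z z' h1 h2 => D.mono_first h1 h2
  -- monotonicity of g
  have hgmono : ∀ w w' : X, w ≤ w' → w' ≤ D.sub t x → g w ≤ g w' := by
    intro w w' hww' hw'
    have h1 : D.sub (D.sub t x) w' ≤ D.sub (D.sub t x) w :=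
      D.sub_antitone hww' hw'
    have h2 : D.sub (D.sub t x) w ≤ t := D.le_top _
    exact D.sub_antitone h1 h2
  refine ⟨{
    toFun := fun z => ⟨D.sub z.1 x, D.bot_le _, hfwd z.1 z.2.1 z.2.2⟩
    invFun := fun w => ⟨g w.1, hg_mem w.1 w.2.1 w.2.2⟩
    left_inv := fun z => Subtype.ext (hleft z.1 z.2.1)
    right_inv := fun w => Subtype.ext (hright w.1 (le_trans w.2.2 hyx_le))
    map_rel_iff' := ?_ }, fun z => rfl, fun w => rfl⟩
  intro a b
  simp only [Equiv.coe_fn_mk, Subtype.mk_le_mk]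
  constructor
  · intro h
    have := hgmono _ _ h (le_trans (hfwd b.1 b.2.1 b.2.2) hyx_le)
    rwa [hleft a.1 a.2.1, hleft b.1 b.2.1] at this
  · intro h
    exact hmono a.1 b.1 a.2.1 h
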